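/- arXiv:2605.03458 — 5 statements merged into one kernel-verified Lean document; each statement's English description precedes it below -/
import Mathlib

section
/- Let A be a ring, let m, n, k, l be natural numbers, and let a : A^m → A^n, b : A^m → A^k, c : A^n → A^l, d : A^k → A^l be A-linear maps between free right A-modules. Let X and Y be right A-modules with surjective A-linear maps p : A^n → X and q : A^l → Y such that the range of a equals the kernel of p and the range of d equals the kernel of q, and let f : X → Y be an A-linear map satisfying f ∘ p = q ∘ c and c ∘ a = d ∘ b. Then for every right A-module M the following are equivalent: (1) M is injective with respect to f; (2) for every A-linear map α : A^n ⊕ A^k → M satisfying α ∘ w = 0, where w : A^m ⊕ A^k → A^n ⊕ A^k is the map (x, y) ↦ (a x, b x − y), there exists an A-linear map β : A^l → M with β ∘ w' = α, where w' : A^n ⊕ A^k → A^l is the map (x, y) ↦ c x − d y. -/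
/-!
STATEMENT 0.  Right `A`-modules are modules over `Aᵐᵒᵖ`, and `A^n` is `Fin n → Aᵐᵒᵖ`.
-/

universe u v w

private lemma factor_through_surjective {R : Type*} [Ring R] {N X M : Type*}
    [AddCommGroup N] [Module R N] [AddCommGroup X] [Module R X]
    [AddCommGroup M] [Module R M]
    (p : N →ₗ[R] X) (hp : Function.Surjective p) (φ : N →ₗ[R] M)
    (h : LinearMap.ker p ≤ LinearMap.ker φ) :
    ∃ g : X →ₗ[R] M, g ∘ₗ p = φ := by
  let e := p.quotKerEquivOfSurjective hp
  refine ⟨((LinearMap.ker p).liftQ φ h).comp e.symm.toLinearMap, ?_⟩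
  apply LinearMap.ext
  intro x
  have : e.symm (p x) = Submodule.Quotient.mk x := by
    rw [LinearEquiv.symm_apply_eq]
    rfl
  simp only [LinearMap.comp_apply, LinearEquiv.coe_coe, this, Submodule.liftQ_apply]

theorem stmt0 {A : Type u} [Ring A] {m n k l : ℕ}
    (a : (Fin m → Aᵐᵒᵖ) →ₗ[Aᵐᵒᵖ] (Fin n → Aᵐᵒᵖ))
    (b : (Fin m → Aᵐᵒᵖ) →ₗ[Aᵐᵒᵖ] (Fin k → Aᵐᵒᵖ))
    (c : (Fin n → Aᵐᵒᵖ) →ₗ[Aᵐᵒᵖ] (Fin l → Aᵐᵒᵖ))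
    (d : (Fin k → Aᵐᵒᵖ) →ₗ[Aᵐᵒᵖ] (Fin l → Aᵐᵒᵖ))
    {X : Type v} [AddCommGroup X] [Module Aᵐᵒᵖ X]
    {Y : Type v} [AddCommGroup Y] [Module Aᵐᵒᵖ Y]
    (p : (Fin n → Aᵐᵒᵖ) →ₗ[Aᵐᵒᵖ] X) (q : (Fin l → Aᵐᵒᵖ) →ₗ[Aᵐᵒᵖ] Y)
    (hp : Function.Surjective p) (hq : Function.Surjective q)
    (hap : LinearMap.range a = LinearMap.ker p)
    (hdq : LinearMap.range d = LinearMap.ker q)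
    (f : X →ₗ[Aᵐᵒᵖ] Y)
    (hfp : f ∘ₗ p = q ∘ₗ c) (hca : c ∘ₗ a = d ∘ₗ b)
    (M : Type w) [AddCommGroup M] [Module Aᵐᵒᵖ M] :
    -- (1) `M` is injective with respect to `f`
    (∀ g : X →ₗ[Aᵐᵒᵖ] M, ∃ g' : Y →ₗ[Aᵐᵒᵖ] M, g' ∘ₗ f = g) ↔
    -- (2) every `α` vanishing on `w` factors through `w'`
    (∀ α : ((Fin n → Aᵐᵒᵖ) × (Fin k → Aᵐᵒᵖ)) →ₗ[Aᵐᵒᵖ] M,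
        α ∘ₗ (LinearMap.prod
              (a ∘ₗ LinearMap.fst Aᵐᵒᵖ (Fin m → Aᵐᵒᵖ) (Fin k → Aᵐᵒᵖ))
              ((b ∘ₗ LinearMap.fst Aᵐᵒᵖ (Fin m → Aᵐᵒᵖ) (Fin k → Aᵐᵒᵖ)) -
                LinearMap.snd Aᵐᵒᵖ (Fin m → Aᵐᵒᵖ) (Fin k → Aᵐᵒᵖ))) = 0 →
        ∃ β : (Fin l → Aᵐᵒᵖ) →ₗ[Aᵐᵒᵖ] M,
          β ∘ₗ ((c ∘ₗ LinearMap.fst Aᵐᵒᵖ (Fin n → Aᵐᵒᵖ) (Fin k → Aᵐᵒᵖ)) -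
                (d ∘ₗ LinearMap.snd Aᵐᵒᵖ (Fin n → Aᵐᵒᵖ) (Fin k → Aᵐᵒᵖ))) = α) := by
  have hqd : ∀ y, q (d y) = 0 := by
    intro y
    have : d y ∈ LinearMap.ker q := hdq ▸ LinearMap.mem_range_self d y
    simpa using this
  have hpa : ∀ x, p (a x) = 0 := by
    intro x
    have : a x ∈ LinearMap.ker p := hap ▸ LinearMap.mem_range_self a x
    simpa using this
  have hfp' : ∀ x, f (p x) = q (c x) := fun x => LinearMap.congr_fun hfp x
  constructor
  · intro h1 α hα
    have hα' : ∀ x y, α (a x, b x - y) = 0 := fun x y => LinearMap.congr_fun hα (x, y)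
    have hα2 : ∀ y : Fin k → Aᵐᵒᵖ, α (0, y) = 0 := by
      intro y
      have := hα' 0 (-y)
      simpa using this
    have hαfst : ∀ x y, α (x, y) = α (x, 0) := by
      intro x y
      have : α (x, y) = α (x, 0) + α (0, y) := by
        rw [← map_add]; congr 1 <;> simp
      rw [this, hα2, add_zero]
    set α₁ : (Fin n → Aᵐᵒᵖ) →ₗ[Aᵐᵒᵖ] M :=
      α ∘ₗ LinearMap.inl Aᵐᵒᵖ _ _ with hα₁def
    have hα₁ : ∀ x, α₁ x = α (x, 0) := fun x => rfl
    have hα₁a : ∀ x, α₁ (a x) = 0 := by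
      intro x
      have := hα' x (b x)
      simpa [hα₁] using this
    obtain ⟨g, hg⟩ := factor_through_surjective p hp α₁ (by
      rw [← hap]
      rintro _ ⟨x, rfl⟩
      exact hα₁a x)
    have hg' : ∀ x, g (p x) = α₁ x := fun x => LinearMap.congr_fun hg x
    obtain ⟨g', hgf⟩ := h1 g
    have hgf' : ∀ x, g' (f x) = g x := fun x => LinearMap.congr_fun hgf x
    refine ⟨g' ∘ₗ q, ?_⟩
    apply LinearMap.ext
    rintro ⟨x, y⟩
    simp only [LinearMap.comp_apply, LinearMap.sub_apply, LinearMap.fst_apply,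
      LinearMap.snd_apply, map_sub, hqd]
    rw [← hfp' x, hgf', hg', hα₁, hαfst x y]
    simp
  · intro h2 g
    set α : ((Fin n → Aᵐᵒᵖ) × (Fin k → Aᵐᵒᵖ)) →ₗ[Aᵐᵒᵖ] M :=
      g ∘ₗ p ∘ₗ LinearMap.fst Aᵐᵒᵖ _ _ with hαdef
    have hαapp : ∀ x y, α (x, y) = g (p x) := fun x y => rfl
    obtain ⟨β, hβ⟩ := h2 α (by
      apply LinearMap.ext
      rintro ⟨x, y⟩
      simp only [LinearMap.comp_apply, LinearMap.prod_apply, Function.prod, LinearMap.zero_apply]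
      rw [hαapp, hpa, map_zero])
    have hβ' : ∀ x y, β (c x - d y) = g (p x) := fun x y => LinearMap.congr_fun hβ (x, y)
    obtain ⟨g', hg'⟩ := factor_through_surjective q hq β (by
      rw [← hdq]
      rintro _ ⟨y, rfl⟩
      have := hβ' 0 (-y)
      simpa using this)
    have hg'' : ∀ z, g' (q z) = β z := fun z => LinearMap.congr_fun hg' z
    refine ⟨g', ?_⟩
    apply LinearMap.ext
    intro x
    obtain ⟨n', rfl⟩ := hp x
    have := hβ' n' 0
    simp only [map_zero, sub_zero] at this
    simp only [LinearMap.comp_apply, hfp' n', hg'', this]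
end

section
/- Let A be a ring and let f : X → Y be an A-linear map between finitely presented right A-modules. Then there exist natural numbers m, n, p and matrices U of size m × n and V of size p × m over A such that for every right A-module M the following are equivalent: (1) M is injective with respect to f; (2) for every x ∈ M^m with x U = 0 there exists y ∈ M^p with x = y V. -/
open MulOpposite

universe u v w

/-- `xU` for a row vector `x` over a right `A`-module `M` and matrix `U` over `A`:
`(xU)_j = ∑ i, x i · U i j` using the right scalar action. -/
def vecMulMat {A : Type u} [Ring A] {M : Type*} [AddCommGroup M] [Module Aᵐᵒᵖ M]
    {m n : ℕ} (x : Fin m → M) (U : Matrix (Fin m) (Fin n) A) : Fin n → M :=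
  fun j => ∑ i, op (U i j) • x i

section helpers

variable {R : Type*} [Ring R]

noncomputable def combo {M : Type*} [AddCommGroup M] [Module R M] {k : ℕ} (v : Fin k → M) :
    (Fin k → R) →ₗ[R] M := Fintype.linearCombination R v

lemma combo_apply {M : Type*} [AddCommGroup M] [Module R M] {k : ℕ} (v : Fin k → M)
    (a : Fin k → R) : combo v a = ∑ i, a i • v i := rfl

lemma combo_single {M : Type*} [AddCommGroup M] [Module R M] {k : ℕ} (v : Fin k → M)
    (i : Fin k) : combo v (Pi.single i (1:R)) = v i := by
  classical
  simp [combo]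

lemma exists_factor {N X M : Type*} [AddCommGroup N] [Module R N] [AddCommGroup X] [Module R X]
    [AddCommGroup M] [Module R M] (π : N →ₗ[R] X) (hπ : Function.Surjective π)
    (φ : N →ₗ[R] M) (h : LinearMap.ker π ≤ LinearMap.ker φ) :
    ∃ g : X →ₗ[R] M, g ∘ₗ π = φ := by
  refine ⟨(Submodule.liftQ _ φ h).comp
    (LinearMap.quotKerEquivOfSurjective π hπ).symm.toLinearMap, ?_⟩
  ext a
  have : (LinearMap.quotKerEquivOfSurjective π hπ).symm (π a) = Submodule.Quotient.mk a := by
    rw [LinearEquiv.symm_apply_eq]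
    rfl
  simp [LinearMap.comp_apply, this]

lemma sum_smul_single {k : ℕ} (a : Fin k → R) : ∑ j, a j • (Pi.single j (1 : R) : Fin k → R) = a := by
  classical
  have : ∀ j, a j • (Pi.single j (1 : R) : Fin k → R) = Pi.single j (a j) := by
    intro j
    rw [← Pi.single_smul, smul_eq_mul, mul_one]
  simp_rw [this]
  exact Finset.univ_sum_single a

end helpers

/-- for any `A`-linear map `f : X → Y` between finitely presented
right `A`-modules there are matrices `U` (of size `m × n`) and `V` (of size `p × m`)
over `A` such that a right `A`-module `M` is injective with respect to `f` if and only
if every `x ∈ M^m` with `xU = 0` is of the form `yV` for some `y ∈ M^p`. -/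
theorem stmt6 (A : Type u) [Ring A]
    {X : Type v} [AddCommGroup X] [Module Aᵐᵒᵖ X] [Module.FinitePresentation Aᵐᵒᵖ X]
    {Y : Type v} [AddCommGroup Y] [Module Aᵐᵒᵖ Y] [Module.FinitePresentation Aᵐᵒᵖ Y]
    (f : X →ₗ[Aᵐᵒᵖ] Y) :
    ∃ (m n p : ℕ) (U : Matrix (Fin m) (Fin n) A) (V : Matrix (Fin p) (Fin m) A),
      ∀ (M : Type w) [AddCommGroup M] [Module Aᵐᵒᵖ M],
        (∀ g : X →ₗ[Aᵐᵒᵖ] M, ∃ g' : Y →ₗ[Aᵐᵒᵖ] M, g' ∘ₗ f = g) ↔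
        (∀ x : Fin m → M, vecMulMat x U = 0 → ∃ y : Fin p → M, x = vecMulMat y V) := by
  classical
  obtain ⟨m, π, hπ⟩ := Module.Finite.exists_fin' Aᵐᵒᵖ X
  obtain ⟨n, u, hu⟩ := Submodule.fg_iff_exists_fin_generating_family.mp
    (Module.FinitePresentation.fg_ker π hπ)
  obtain ⟨p, ρ, hρ⟩ := Module.Finite.exists_fin' Aᵐᵒᵖ Y
  obtain ⟨q, w, hw⟩ := Submodule.fg_iff_exists_fin_generating_family.mp
    (Module.FinitePresentation.fg_ker ρ hρ)
  choose t ht using fun i : Fin m => hρ (f (π (Pi.single i (1 : Aᵐᵒᵖ))))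
  set U : Matrix (Fin (m + q)) (Fin (n + q)) A :=
    Matrix.of fun i j => Fin.addCases
      (fun i₀ => Fin.addCases (fun j₀ => unop (u j₀ i₀)) (fun _ => (0 : A)) j)
      (fun i₁ => Fin.addCases (fun _ => (0 : A)) (fun j₁ => if i₁ = j₁ then 1 else 0) j) i
    with hU
  set V : Matrix (Fin p) (Fin (m + q)) A :=
    Matrix.of fun j i => Fin.addCases (fun i₀ => unop (t i₀ j)) (fun i₁ => unop (w i₁ j)) i
    with hV
  refine ⟨m + q, n + q, p, U, V, fun M _ _ => ?_⟩
  -- key computations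
  have hUc : ∀ (x : Fin (m + q) → M) (j₀ : Fin n),
      vecMulMat x U (Fin.castAdd q j₀) = ∑ i₀, u j₀ i₀ • x (Fin.castAdd q i₀) := by
    intro x j₀
    simp [vecMulMat, hU, Fin.sum_univ_add]
  have hUn : ∀ (x : Fin (m + q) → M) (j₁ : Fin q),
      vecMulMat x U (Fin.natAdd n j₁) = x (Fin.natAdd m j₁) := by
    intro x j₁
    simp [vecMulMat, hU, Fin.sum_univ_add, apply_ite (op (α := A)), ite_smul]
  have hVc : ∀ (y : Fin p → M) (i₀ : Fin m),
      vecMulMat y V (Fin.castAdd q i₀) = combo y (t i₀) := by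
    intro y i₀
    simp [vecMulMat, hV, combo_apply]
  have hVn : ∀ (y : Fin p → M) (i₁ : Fin q),
      vecMulMat y V (Fin.natAdd m i₁) = combo y (w i₁) := by
    intro y i₁
    simp [vecMulMat, hV, combo_apply]
  have hcombo : ∀ (h' : (Fin p → Aᵐᵒᵖ) →ₗ[Aᵐᵒᵖ] M),
      combo (fun j => h' (Pi.single j (1 : Aᵐᵒᵖ))) = h' := by
    intro h'
    apply (Pi.basisFun Aᵐᵒᵖ (Fin p)).ext
    intro j
    rw [Pi.basisFun_apply, combo_single]
  constructor
  · -- injectivity → solvability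
    intro h1 x hx
    have hker : LinearMap.ker π ≤ LinearMap.ker (combo fun i₀ => x (Fin.castAdd q i₀)) := by
      rw [← hu, Submodule.span_le]
      rintro _ ⟨j₀, rfl⟩
      have := congrFun hx (Fin.castAdd q j₀)
      rw [hUc] at this
      simpa [combo_apply, LinearMap.mem_ker] using this
    obtain ⟨g, hg⟩ := exists_factor π hπ _ hker
    obtain ⟨g', hg'⟩ := h1 g
    refine ⟨fun j => g' (ρ (Pi.single j (1 : Aᵐᵒᵖ))), ?_⟩
    have key : combo (fun j => g' (ρ (Pi.single j (1 : Aᵐᵒᵖ)))) = g' ∘ₗ ρ :=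
      hcombo (g' ∘ₗ ρ)
    funext i
    refine Fin.addCases (fun i₀ => ?_) (fun i₁ => ?_) i
    · rw [hVc, key]
      have h3 : g' (ρ (t i₀)) = g (π (Pi.single i₀ (1 : Aᵐᵒᵖ))) := by
        rw [ht i₀, ← LinearMap.comp_apply g' f, hg']
      have h4 : g (π (Pi.single i₀ (1 : Aᵐᵒᵖ))) = x (Fin.castAdd q i₀) := by
        rw [← LinearMap.comp_apply, hg, combo_single]
      rw [LinearMap.comp_apply, h3, h4]
    · rw [hVn, key]
      have hw1 : w i₁ ∈ LinearMap.ker ρ := by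
        rw [← hw]; exact Submodule.subset_span ⟨i₁, rfl⟩
      have hx1 := congrFun hx (Fin.natAdd n i₁)
      rw [hUn] at hx1
      rw [LinearMap.comp_apply, LinearMap.mem_ker.mp hw1, map_zero, hx1]
      rfl
  · -- solvability → injectivity
    intro h2 g
    set x : Fin (m + q) → M :=
      Fin.addCases (fun i₀ => g (π (Pi.single i₀ (1 : Aᵐᵒᵖ)))) (fun _ => 0) with hxdef
    have hxc : ∀ i₀, x (Fin.castAdd q i₀) = g (π (Pi.single i₀ (1 : Aᵐᵒᵖ))) := fun i₀ => by
      simp only [hxdef, Fin.addCases_left]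
    have hxn : ∀ i₁, x (Fin.natAdd m i₁) = 0 := fun i₁ => by
      simp only [hxdef, Fin.addCases_right]
    have hgπ : ∀ a : Fin m → Aᵐᵒᵖ, ∑ i₀, a i₀ • x (Fin.castAdd q i₀) = g (π a) := by
      intro a
      simp_rw [hxc]
      conv_rhs => rw [(sum_smul_single a).symm]
      rw [map_sum, map_sum]
      simp
    have hx : vecMulMat x U = 0 := by
      funext j
      refine Fin.addCases (fun j₀ => ?_) (fun j₁ => ?_) j
      · rw [hUc, hgπ]
        have : u j₀ ∈ LinearMap.ker π := by
          rw [← hu]; exact Submodule.subset_span ⟨j₀, rfl⟩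
        rw [LinearMap.mem_ker.mp this, map_zero]
        rfl
      · rw [hUn, hxn]
        rfl
    obtain ⟨y, hy⟩ := h2 x hx
    have hker : LinearMap.ker ρ ≤ LinearMap.ker (combo y) := by
      rw [← hw, Submodule.span_le]
      rintro _ ⟨i₁, rfl⟩
      have := congrFun hy (Fin.natAdd m i₁)
      rw [hVn] at this
      rw [SetLike.mem_coe, LinearMap.mem_ker, ← this, hxn]
    obtain ⟨g', hg'⟩ := exists_factor ρ hρ _ hker
    refine ⟨g', ?_⟩
    rw [← LinearMap.cancel_right hπ]
    apply (Pi.basisFun Aᵐᵒᵖ (Fin m)).ext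
    intro i₀
    rw [Pi.basisFun_apply]
    have h5 : g' (ρ (t i₀)) = combo y (t i₀) := by
      rw [← LinearMap.comp_apply, hg']
    have h6 := congrFun hy (Fin.castAdd q i₀)
    rw [hVc] at h6
    calc ((g' ∘ₗ f) ∘ₗ π) (Pi.single i₀ (1 : Aᵐᵒᵖ))
        = g' (ρ (t i₀)) := by rw [ht i₀]; rfl
      _ = combo y (t i₀) := h5
      _ = x (Fin.castAdd q i₀) := h6.symm
      _ = (g ∘ₗ π) (Pi.single i₀ (1 : Aᵐᵒᵖ)) := by rw [hxc]; rfl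
end

section
/- Let A be a ring, and let U be an m × n matrix and V a p × m matrix over A. Let u : A^n → A^m and v : A^m → A^p be the A-linear maps between free right A-modules given by left multiplication by U and V respectively on column vectors. Set X := A^m / range(u) and Y := A^p / range(v ∘ u), and let f : X → Y be the A-linear map induced by v. Then X and Y are finitely presented right A-modules, and for every right A-module M the following are equivalent: (1) for every x ∈ M^m with x U = 0 there exists y ∈ M^p with x = y V; (2) M is injective with respect to f. -/
open MulOpposite

universe u w

/-- The `A`-linear map `A^n → A^m` of free right `A`-modules given by left multiplication
by the `m × n` matrix `U` on column vectors: the `i`-th entry of `U·x` is `∑ j, U i j * x j`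
(computed in `A`); it sends the basis vector `e j` to `∑ i, e i · U i j`. -/
def matMulVecLin {A : Type u} [Ring A] {m n : ℕ} (U : Matrix (Fin m) (Fin n) A) :
    (Fin n → Aᵐᵒᵖ) →ₗ[Aᵐᵒᵖ] (Fin m → Aᵐᵒᵖ) where
  toFun x := fun i => ∑ j, x j * op (U i j)
  map_add' x y := by
    funext i
    simp [add_mul, Finset.sum_add_distrib]
  map_smul' c x := by
    funext i
    simp [smul_eq_mul, Finset.mul_sum, mul_assoc]


/-- Evaluation map `A^m → M` attached to a row vector `x ∈ M^m`. -/
def evalLin {A : Type u} [Ring A] {M : Type w} [AddCommGroup M] [Module Aᵐᵒᵖ M]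
    {m : ℕ} (x : Fin m → M) : (Fin m → Aᵐᵒᵖ) →ₗ[Aᵐᵒᵖ] M where
  toFun w := ∑ i, w i • x i
  map_add' w w' := by simp [add_smul, Finset.sum_add_distrib]
  map_smul' c w := by simp [mul_smul, Finset.smul_sum]

theorem evalLin_single {A : Type u} [Ring A] {M : Type w} [AddCommGroup M] [Module Aᵐᵒᵖ M]
    {m : ℕ} (x : Fin m → M) (i : Fin m) :
    evalLin x (Pi.single i (1 : Aᵐᵒᵖ)) = x i := by
  simp [evalLin, Pi.single_apply]

theorem evalLin_comp {A : Type u} [Ring A] {M : Type w} [AddCommGroup M] [Module Aᵐᵒᵖ M]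
    {m n : ℕ} (x : Fin m → M) (U : Matrix (Fin m) (Fin n) A) :
    (evalLin x) ∘ₗ (matMulVecLin U) = evalLin (vecMulMat x U) := by
  apply LinearMap.ext; intro w
  simp only [LinearMap.comp_apply, evalLin, matMulVecLin, vecMulMat,
    LinearMap.coe_mk, AddHom.coe_mk]
  calc ∑ i, (∑ j, w j * op (U i j)) • x i
      = ∑ i, ∑ j, w j • (op (U i j) • x i) := by
        simp [Finset.sum_smul, mul_smul]
    _ = ∑ j, w j • ∑ i, op (U i j) • x i := by
        rw [Finset.sum_comm]; simp [Finset.smul_sum]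

theorem matMulVecLin_single {A : Type u} [Ring A] {m n : ℕ}
    (U : Matrix (Fin m) (Fin n) A) (j : Fin n) :
    matMulVecLin U (Pi.single j (1 : Aᵐᵒᵖ)) = ∑ i, op (U i j) • Pi.single i (1 : Aᵐᵒᵖ) := by
  funext i
  simp [matMulVecLin, Pi.single_apply, Finset.sum_apply, smul_eq_mul, mul_ite]

theorem quotFP {A : Type u} [Ring A] {k l : ℕ} (W : (Fin l → Aᵐᵒᵖ) →ₗ[Aᵐᵒᵖ] (Fin k → Aᵐᵒᵖ)) :
    Module.FinitePresentation Aᵐᵒᵖ ((Fin k → Aᵐᵒᵖ) ⧸ LinearMap.range W) := by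
  refine Module.finitePresentation_of_surjective (LinearMap.range W).mkQ
    (Submodule.mkQ_surjective _) ?_
  rw [Submodule.ker_mkQ, LinearMap.range_eq_map]
  exact Submodule.FG.map W Module.Finite.fg_top

/-- with `X := A^m / range u` and `Y := A^p / range (v ∘ u)` where
`u = U·(-)` and `v = V·(-)`, both `X` and `Y` are finitely presented, and a right
`A`-module `M` satisfies the matrix condition for `(U, V)` iff it is injective with
respect to the induced map `f : X → Y`. -/
theorem stmt7 (A : Type u) [Ring A] {m n p : ℕ}
    (U : Matrix (Fin m) (Fin n) A) (V : Matrix (Fin p) (Fin m) A) :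
    Module.FinitePresentation Aᵐᵒᵖ
      ((Fin m → Aᵐᵒᵖ) ⧸ LinearMap.range (matMulVecLin U)) ∧
    Module.FinitePresentation Aᵐᵒᵖ
      ((Fin p → Aᵐᵒᵖ) ⧸ LinearMap.range (matMulVecLin V ∘ₗ matMulVecLin U)) ∧
    ∀ (M : Type w) [AddCommGroup M] [Module Aᵐᵒᵖ M],
      (∀ x : Fin m → M, vecMulMat x U = 0 → ∃ y : Fin p → M, x = vecMulMat y V) ↔
      (∀ g : ((Fin m → Aᵐᵒᵖ) ⧸ LinearMap.range (matMulVecLin U)) →ₗ[Aᵐᵒᵖ] M,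
        ∃ g' : ((Fin p → Aᵐᵒᵖ) ⧸ LinearMap.range (matMulVecLin V ∘ₗ matMulVecLin U))
            →ₗ[Aᵐᵒᵖ] M,
          g' ∘ₗ (Submodule.mapQ (LinearMap.range (matMulVecLin U))
              (LinearMap.range (matMulVecLin V ∘ₗ matMulVecLin U)) (matMulVecLin V)
              (by rintro x ⟨y, rfl⟩; exact ⟨y, rfl⟩)) = g) := by
  refine ⟨quotFP _, quotFP _, fun M _ _ => ⟨fun H g => ?_, fun H x hx => ?_⟩⟩
  · -- matrix condition implies injectivity
    set x : Fin m → M := fun i => g (Submodule.Quotient.mk (Pi.single i 1)) with hxdef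
    have hxU : vecMulMat x U = 0 := by
      funext j
      have h0 : (vecMulMat x U) j
          = g (Submodule.Quotient.mk (matMulVecLin U (Pi.single j 1))) := by
        rw [matMulVecLin_single]
        simp only [vecMulMat, hxdef, ← Submodule.mkQ_apply, map_sum, map_smul]
      rw [h0]
      have h1 : Submodule.Quotient.mk (p := LinearMap.range (matMulVecLin U))
          (matMulVecLin U (Pi.single j 1)) = 0 :=
        (Submodule.Quotient.mk_eq_zero _).2 ⟨_, rfl⟩
      rw [h1, map_zero]
      rfl
    obtain ⟨y, hy⟩ := H x hxU
    have h1 : evalLin y ∘ₗ matMulVecLin V = evalLin x := by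
      rw [evalLin_comp, ← hy]
    have h2 : (evalLin x) ∘ₗ matMulVecLin U = 0 := by
      rw [evalLin_comp, hxU]
      apply LinearMap.ext; intro w; simp [evalLin]
    have hker : LinearMap.range (matMulVecLin V ∘ₗ matMulVecLin U) ≤
        LinearMap.ker (evalLin y) := by
      rintro z ⟨w, rfl⟩
      simp only [LinearMap.mem_ker, LinearMap.comp_apply]
      have e1 := congrArg (fun f => f (matMulVecLin U w)) h1
      simp only [LinearMap.comp_apply] at e1
      rw [e1]
      have e2 := congrArg (fun f => f w) h2
      simpa using e2
    refine ⟨Submodule.liftQ _ (evalLin y) hker, ?_⟩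
    apply Submodule.linearMap_qext
    apply Module.Basis.ext (Pi.basisFun Aᵐᵒᵖ (Fin m))
    intro i
    simp only [Pi.basisFun_apply, LinearMap.comp_apply, Submodule.mkQ_apply,
      Submodule.mapQ_apply, Submodule.liftQ_apply]
    have e1 := congrArg (fun f => f (Pi.single i (1 : Aᵐᵒᵖ))) h1
    simp only [LinearMap.comp_apply] at e1
    rw [e1, evalLin_single]
  · -- injectivity implies matrix condition
    have hker : LinearMap.range (matMulVecLin U) ≤ LinearMap.ker (evalLin x) := by
      rintro z ⟨w, rfl⟩
      have h2 : (evalLin x) ∘ₗ matMulVecLin U = 0 := by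
        rw [evalLin_comp, hx]
        apply LinearMap.ext; intro w; simp [evalLin]
      have := congrArg (fun f => f w) h2
      simpa using this
    obtain ⟨g', hg'⟩ := H (Submodule.liftQ _ (evalLin x) hker)
    refine ⟨fun k => g' (Submodule.Quotient.mk (Pi.single k 1)), ?_⟩
    funext i
    have := congrArg (fun f => f (Submodule.Quotient.mk (Pi.single i 1))) hg'
    simp only [LinearMap.comp_apply, Submodule.mapQ_apply, Submodule.liftQ_apply,
      evalLin_single] at this
    rw [← this, matMulVecLin_single]
    simp only [vecMulMat, ← Submodule.mkQ_apply, map_sum, map_smul]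
end

section
/- Let A be a ring. Let (U_i, V_i)_{i ∈ I} and (U'_j, V'_j)_{j ∈ J} be two families of pairs of matrices over A, where each U has size m × n and the corresponding V has size p × m (sizes depending on the index). Suppose that the two families define the same class of right A-modules, i.e. for every right A-module M one has [for all i ∈ I and all x ∈ M^{m_i}, x U_i = 0 implies x = y V_i for some y ∈ M^{p_i}] if and only if [for all j ∈ J and all x ∈ M^{m'_j}, x U'_j = 0 implies x = y V'_j for some y ∈ M^{p'_j}]. Then the swapped families define the same class of left A-modules, i.e. for every left A-module N one has [for all i ∈ I and all x ∈ N^{m_i}, V_i x = 0 implies x = U_i y for some y ∈ N^{n_i}] if and only if [for all j ∈ J and all x ∈ N^{m'_j}, V'_j x = 0 implies x = U'_j y for some y ∈ N^{n'_j}]. -/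
open MulOpposite

universe u

/-- `Vx` for a column vector `x` over a left `A`-module `N` and matrix `V` over `A`:
`(Vx)_k = ∑ i, V k i • x i` using the left scalar action. -/
def matVecMul {A : Type u} [Ring A] {N : Type*} [AddCommGroup N] [Module A N]
    {p m : ℕ} (V : Matrix (Fin p) (Fin m) A) (x : Fin m → N) : Fin p → N :=
  fun k => ∑ i, V k i • x i

section CharRight

variable {A : Type u} [Ring A] {N : Type*} [AddCommGroup N] [Module A N]

/-- The character module of a left `A`-module is a right `A`-module. -/
noncomputable instance charRightModule : Module Aᵐᵒᵖ (CharacterModule N) where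
  smul a c := (c : N →+ _).comp (DistribMulAction.toAddMonoidHom N a.unop)
  one_smul c := by ext z; show c ((1 : A) • z) = c z; rw [one_smul]
  mul_smul a b c := by
    ext z
    show c ((b.unop * a.unop) • z) = c (b.unop • a.unop • z)
    rw [mul_smul]
  smul_zero a := rfl
  smul_add a c c' := rfl
  add_smul a b c := by
    ext z
    show c ((a.unop + b.unop) • z) = c (a.unop • z) + c (b.unop • z)
    rw [add_smul, map_add]
  zero_smul c := by ext z; show c ((0 : A) • z) = 0; rw [zero_smul, map_zero]

lemma char_smul_apply (a : Aᵐᵒᵖ) (c : CharacterModule N) (z : N) :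
    (a • c) z = c (a.unop • z) := rfl

/-- evaluation at a point as an additive hom on the character module -/
def charEval (z : N) : CharacterModule N →+ AddCircle (1 : ℚ) :=
  AddMonoidHom.mk' (fun c => c z) (fun _ _ => rfl)

lemma char_sum_apply {ι : Type*} (s : Finset ι) (c : ι → CharacterModule N) (z : N) :
    (∑ i ∈ s, c i) z = ∑ i ∈ s, c i z :=
  map_sum (charEval z) c s

/-- `matVecMul` as an additive monoid hom. -/
def matVecMulHom {p m : ℕ} (V : Matrix (Fin p) (Fin m) A) :
    (Fin m → N) →+ (Fin p → N) :=
  AddMonoidHom.mk' (matVecMul V) (by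
    intro x y
    funext k
    simp [matVecMul, smul_add, Finset.sum_add_distrib])

lemma matVecMulHom_single {p m : ℕ} (V : Matrix (Fin p) (Fin m) A) (i : Fin m) (z : N) :
    matVecMulHom V (Pi.single i z) = fun k => V k i • z := by
  funext k
  show ∑ i', V k i' • (Pi.single i z : Fin m → N) i' = V k i • z
  rw [Finset.sum_eq_single i]
  · rw [Pi.single_eq_same]
  · intro b _ hb
    rw [Pi.single_eq_of_ne hb, smul_zero]
  · intro h; exact absurd (Finset.mem_univ i) h

/-- Key duality lemma: the left-module lifting condition for `(U, V)` on `N` is equivalent to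
the right-module lifting condition for `(U, V)` on the character module of `N`. -/
lemma key_duality {m n p : ℕ} (U : Matrix (Fin m) (Fin n) A)
    (V : Matrix (Fin p) (Fin m) A) :
    (∀ x : Fin m → N, matVecMul V x = 0 → ∃ y : Fin n → N, x = matVecMul U y) ↔
    (∀ x : Fin m → CharacterModule N, vecMulMat x U = 0 →
        ∃ y : Fin p → CharacterModule N, x = vecMulMat y V) := by
  constructor
  · intro hN x hxU
    -- the character `w ↦ ∑ i, x i (w i)` of `N^m`
    set c : (Fin m → N) →+ AddCircle (1 : ℚ) :=
      AddMonoidHom.mk' (fun w => ∑ i, x i (w i)) (by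
        intro w w'
        simp [map_add, Finset.sum_add_distrib]) with hc
    -- `c` kills the kernel of `V·`
    have hker : LinearMap.ker (matVecMulHom (N := N) V).toIntLinearMap ≤
        LinearMap.ker c.toIntLinearMap := by
      intro w hw
      obtain ⟨y, hy⟩ := hN w hw
      show ∑ i, x i (w i) = 0
      have : ∀ i, x i (w i) = ∑ k, x i (U i k • y k) := by
        intro i
        rw [hy]
        show x i (∑ k, U i k • y k) = _
        rw [map_sum]
      rw [Finset.sum_congr rfl fun i _ => this i, Finset.sum_comm]
      have : ∀ k, ∑ i, x i (U i k • y k) = 0 := by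
        intro k
        have h0 : vecMulMat x U k = (0 : CharacterModule N) := by rw [hxU]; rfl
        have := congrArg (fun ψ : CharacterModule N => ψ (y k)) h0
        have h' : (0 : CharacterModule N) (y k) = 0 := rfl
        simpa [vecMulMat, char_sum_apply, char_smul_apply] using this.trans h'
      simp [this]
    -- descend `c` to the quotient by the kernel and factor through the range of `V·`
    set fV := (matVecMulHom (N := N) V).toIntLinearMap with hfV
    set K := LinearMap.ker fV with hK
    set φ : ((Fin m → N) ⧸ K) →ₗ[ℤ] (Fin p → N) := K.liftQ fV le_rfl with hφ
    have hφinj : Function.Injective φ := by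
      rw [← LinearMap.ker_eq_bot, hφ, Submodule.ker_liftQ_eq_bot _ _ _ le_rfl]
    set cbar : CharacterModule ((Fin m → N) ⧸ K) :=
      (K.liftQ c.toIntLinearMap hker).toAddMonoidHom with hcbar
    obtain ⟨ψ, hψ⟩ := CharacterModule.dual_surjective_of_injective φ hφinj cbar
    -- ψ composed with `V·` equals `c`
    have hψV : ∀ w : Fin m → N, ψ (matVecMul V w) = ∑ i, x i (w i) := by
      intro w
      have : ψ (φ (Submodule.Quotient.mk w)) = cbar (Submodule.Quotient.mk w) := by
        rw [← hψ]; rfl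
      exact this
    set yψ : Fin p → CharacterModule N :=
      fun k => (ψ : (Fin p → N) →+ _).comp (AddMonoidHom.single (fun _ : Fin p => N) k) with hyψ
    refine ⟨yψ, ?_⟩
    funext i
    ext z
    have h1 : (vecMulMat yψ V) i z = ψ (fun k => V k i • z) := by
      rw [show (fun k => V k i • z) = matVecMulHom (N := N) V (Pi.single i z) from
        (matVecMulHom_single V i z).symm]
      show (∑ k, op (V k i) • yψ k) z = ψ (matVecMulHom (N := N) V (Pi.single i z))
      rw [char_sum_apply]
      have : ∀ k, (op (V k i) • yψ k) z = ψ (Pi.single k (V k i • z)) := fun k => rfl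
      rw [Finset.sum_congr rfl fun k _ => this k, ← map_sum]
      refine congrArg ψ ?_
      rw [matVecMulHom_single]
      exact Finset.univ_sum_single _
    rw [h1]
    have h2 : ψ (matVecMul V (Pi.single i z)) = ∑ i', x i' ((Pi.single i z : Fin m → N) i') :=
      hψV (Pi.single i z)
    have h3 : ∑ i', x i' ((Pi.single i z : Fin m → N) i') = x i z := by
      rw [Finset.sum_eq_single i]
      · rw [Pi.single_eq_same]
      · intro b _ hb
        rw [Pi.single_eq_of_ne hb, map_zero]
      · intro h; exact absurd (Finset.mem_univ i) h
    have h4 : (fun k => V k i • z) = matVecMul V (Pi.single i z) :=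
      (matVecMulHom_single V i z).symm
    rw [h4, h2, h3]
  · intro hC x hVx
    by_contra hx
    push_neg at hx
    -- quotient of `N^m` by the image of `U·`
    set fU := (matVecMulHom (N := N) U).toIntLinearMap with hfU
    set S := LinearMap.range fU with hS
    have hxS : Submodule.Quotient.mk (p := S) x ≠ 0 := by
      intro h0
      rw [Submodule.Quotient.mk_eq_zero] at h0
      obtain ⟨y, hy⟩ := h0
      exact hx y hy.symm
    obtain ⟨c, hcx⟩ := CharacterModule.exists_character_apply_ne_zero_of_ne_zero hxS
    set c' : (Fin m → N) →+ AddCircle (1 : ℚ) :=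
      (c : ((Fin m → N) ⧸ S) →+ _).comp (S.mkQ).toAddMonoidHom with hc'
    have hc'U : ∀ w : Fin n → N, c' (matVecMul U w) = 0 := by
      intro w
      show c ((S.mkQ) (fU w)) = 0
      rw [show (S.mkQ) (fU w) = 0 from by
        rw [Submodule.mkQ_apply, Submodule.Quotient.mk_eq_zero]; exact ⟨w, rfl⟩]
      exact map_zero c
    set xc : Fin m → CharacterModule N :=
      fun i => (c'.comp (AddMonoidHom.single (fun _ : Fin m => N) i) : CharacterModule N) with hxc
    have hxcU : vecMulMat xc U = 0 := by
      funext j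
      ext z
      show (∑ i, op (U i j) • xc i) z = 0
      rw [char_sum_apply]
      have : ∀ i, (op (U i j) • xc i) z = c' (Pi.single i (U i j • z)) := fun i => rfl
      rw [Finset.sum_congr rfl fun i _ => this i, ← map_sum, Finset.univ_sum_single]
      rw [show (fun i => U i j • z) = matVecMul U (Pi.single j z) from
        (matVecMulHom_single U j z).symm]
      exact hc'U _
    obtain ⟨y, hy⟩ := hC xc hxcU
    -- evaluate both sides against `x`
    have hL : ∑ i, xc i (x i) = c (Submodule.Quotient.mk x) := by
      have : ∀ i, xc i (x i) = c' (Pi.single i (x i)) := fun i => rfl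
      rw [Finset.sum_congr rfl fun i _ => this i, ← map_sum, Finset.univ_sum_single]
      rfl
    have hR : ∑ i, (vecMulMat y V) i (x i) = 0 := by
      have : ∀ i, (vecMulMat y V) i (x i) = ∑ k, y k (V k i • x i) := by
        intro i
        show (∑ k, op (V k i) • y k) (x i) = _
        rw [char_sum_apply]
        rfl
      rw [Finset.sum_congr rfl fun i _ => this i, Finset.sum_comm]
      have : ∀ k, ∑ i, y k (V k i • x i) = 0 := by
        intro k
        rw [← map_sum]
        have h0 : (∑ i, V k i • x i) = 0 := by
          have := congrFun hVx k
          simpa [matVecMul] using this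
        rw [h0, map_zero]
      simp [this]
    rw [hy] at hL
    rw [hR] at hL
    exact hcx hL.symm

end CharRight

/-- if two families of pairs of matrices define the same class of right
`A`-modules, then the swapped families define the same class of left `A`-modules. -/
theorem stmt9 (A : Type u) [Ring A]
    {I : Type*} {m n p : I → ℕ}
    (U : ∀ i, Matrix (Fin (m i)) (Fin (n i)) A)
    (V : ∀ i, Matrix (Fin (p i)) (Fin (m i)) A)
    {J : Type*} {m' n' p' : J → ℕ}
    (U' : ∀ j, Matrix (Fin (m' j)) (Fin (n' j)) A)
    (V' : ∀ j, Matrix (Fin (p' j)) (Fin (m' j)) A)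
    (h : ∀ (M : Type u) [AddCommGroup M] [Module Aᵐᵒᵖ M],
      (∀ i (x : Fin (m i) → M), vecMulMat x (U i) = 0 →
          ∃ y : Fin (p i) → M, x = vecMulMat y (V i)) ↔
      (∀ j (x : Fin (m' j) → M), vecMulMat x (U' j) = 0 →
          ∃ y : Fin (p' j) → M, x = vecMulMat y (V' j))) :
    ∀ (N : Type u) [AddCommGroup N] [Module A N],
      (∀ i (x : Fin (m i) → N), matVecMul (V i) x = 0 →
          ∃ y : Fin (n i) → N, x = matVecMul (U i) y) ↔
      (∀ j (x : Fin (m' j) → N), matVecMul (V' j) x = 0 →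
          ∃ y : Fin (n' j) → N, x = matVecMul (U' j) y) := by
  intro N _ _
  calc
    (∀ i (x : Fin (m i) → N), matVecMul (V i) x = 0 →
          ∃ y : Fin (n i) → N, x = matVecMul (U i) y)
      ↔ (∀ i (x : Fin (m i) → CharacterModule N), vecMulMat x (U i) = 0 →
          ∃ y : Fin (p i) → CharacterModule N, x = vecMulMat y (V i)) :=
        forall_congr' fun i => key_duality (U i) (V i)
    _ ↔ (∀ j (x : Fin (m' j) → CharacterModule N), vecMulMat x (U' j) = 0 →
          ∃ y : Fin (p' j) → CharacterModule N, x = vecMulMat y (V' j)) :=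
        h (CharacterModule N)
    _ ↔ (∀ j (x : Fin (m' j) → N), matVecMul (V' j) x = 0 →
          ∃ y : Fin (n' j) → N, x = matVecMul (U' j) y) :=
        (forall_congr' fun j => key_duality (U' j) (V' j)).symm
end

section
/- Let A be a ring. The assignment sending the definable class of right A-modules defined by a family of pairs of matrices (U_i, V_i)_{i ∈ I} (U_i of size m_i × n_i, V_i of size p_i × m_i) to the class of left A-modules defined by the swapped family (V_i, U_i)_{i ∈ I} — namely, the class of left A-modules N such that for every i ∈ I and every x ∈ N^{m_i} with V_i x = 0 there exists y ∈ N^{n_i} with x = U_i y — is a well-defined, inclusion-preserving bijection from the set of definable classes of right A-modules onto the set of definable classes of left A-modules, whose inverse is given by the analogous swapping construction on families of matrix pairs defining classes of left A-modules. -/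
open MulOpposite CategoryTheory

universe u

/-- The class of right `A`-modules defined by the family of pairs of matrices
`(U i, V i)_{i ∈ I}` (`U i` of size `m i × n i`, `V i` of size `p i × m i`). -/
def rightClass (A : Type u) [Ring A] {I : Type u} (m n p : I → ℕ)
    (U : ∀ i, Matrix (Fin (m i)) (Fin (n i)) A)
    (V : ∀ i, Matrix (Fin (p i)) (Fin (m i)) A) :
    ModuleCat.{u} Aᵐᵒᵖ → Prop :=
  fun M => ∀ i (x : Fin (m i) → M), vecMulMat x (U i) = 0 →
    ∃ y : Fin (p i) → M, x = vecMulMat y (V i)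

/-- The class of left `A`-modules defined by the swapped family `(V i, U i)_{i ∈ I}`:
`N` belongs to it iff for every `i` and `x ∈ N^{m i}` with `V i · x = 0` there is
`y ∈ N^{n i}` with `x = U i · y`. -/
def leftClass (A : Type u) [Ring A] {I : Type u} (m n p : I → ℕ)
    (U : ∀ i, Matrix (Fin (m i)) (Fin (n i)) A)
    (V : ∀ i, Matrix (Fin (p i)) (Fin (m i)) A) :
    ModuleCat.{u} A → Prop :=
  fun N => ∀ i (x : Fin (m i) → N), matVecMul (V i) x = 0 →
    ∃ y : Fin (n i) → N, x = matVecMul (U i) y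

/-- A class of right `A`-modules is definable iff it is the class defined by some family
of pairs of matrices (the characterization of definability used here). -/
def IsDefinableRight (A : Type u) [Ring A] (D : ModuleCat.{u} Aᵐᵒᵖ → Prop) : Prop :=
  ∃ (I : Type u) (m n p : I → ℕ)
    (U : ∀ i, Matrix (Fin (m i)) (Fin (n i)) A)
    (V : ∀ i, Matrix (Fin (p i)) (Fin (m i)) A),
    D = rightClass A m n p U V

/-- A class of left `A`-modules is definable iff it is the class defined by some family
of pairs of matrices with the left-handed matrix condition. -/
def IsDefinableLeft (A : Type u) [Ring A] (E : ModuleCat.{u} A → Prop) : Prop :=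
  ∃ (I : Type u) (m n p : I → ℕ)
    (U : ∀ i, Matrix (Fin (m i)) (Fin (n i)) A)
    (V : ∀ i, Matrix (Fin (p i)) (Fin (m i)) A),
    E = leftClass A m n p U V

namespace Stmt11Aux

abbrev QZ : Type := AddCircle (1 : ℚ)

variable {A : Type u} [Ring A]

section RightModule

variable {M : Type*} [AddCommGroup M] [Module Aᵐᵒᵖ M]

/-- Left `A`-module structure on characters of a right `A`-module. -/
instance charLeft : Module A (M →+ QZ) where
  smul a f := f.comp (DistribMulAction.toAddMonoidHom M (op a))
  one_smul f := by ext z; show f (op (1:A) • z) = f z; rw [op_one, one_smul]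
  mul_smul a b f := by
    ext z; show f (op (a * b) • z) = f (op b • op a • z)
    rw [op_mul, mul_smul]
  smul_zero _ := rfl
  smul_add _ _ _ := rfl
  add_smul a b f := by
    ext z; show f (op (a + b) • z) = f (op a • z) + f (op b • z)
    rw [MulOpposite.op_add, add_smul, map_add]
  zero_smul f := by ext z; show f (op (0:A) • z) = 0; rw [op_zero, zero_smul, map_zero]

@[simp] lemma charLeft_smul_apply (a : A) (f : M →+ QZ) (z : M) :
    (a • f) z = f (op a • z) := rfl

end RightModule

section LeftModule

variable {N : Type*} [AddCommGroup N] [Module A N]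

/-- Right `A`-module structure on characters of a left `A`-module. -/
instance charRight : Module Aᵐᵒᵖ (N →+ QZ) where
  smul a f := f.comp (DistribMulAction.toAddMonoidHom N a.unop)
  one_smul f := by ext z; show f ((1:Aᵐᵒᵖ).unop • z) = f z; rw [unop_one, one_smul]
  mul_smul a b f := by
    ext z; show f ((a * b).unop • z) = f (b.unop • a.unop • z)
    rw [MulOpposite.unop_mul, mul_smul]
  smul_zero _ := rfl
  smul_add _ _ _ := rfl
  add_smul a b f := by
    ext z; show f ((a + b).unop • z) = f (a.unop • z) + f (b.unop • z)
    rw [MulOpposite.unop_add, add_smul, map_add]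
  zero_smul f := by
    ext z; show f ((0:Aᵐᵒᵖ).unop • z) = 0; rw [unop_zero, zero_smul, map_zero]

@[simp] lemma charRight_smul_apply (a : Aᵐᵒᵖ) (f : N →+ QZ) (z : N) :
    (a • f) z = f (a.unop • z) := rfl

end LeftModule

section RightLemmas

variable {M : Type u} [AddCommGroup M] [Module Aᵐᵒᵖ M]

/-- `x ↦ xU` as an additive monoid hom. -/
def vecMulMatHom {m n : ℕ} (U : Matrix (Fin m) (Fin n) A) :
    (Fin m → M) →+ (Fin n → M) where
  toFun x := vecMulMat x U
  map_zero' := by funext j; simp [vecMulMat]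
  map_add' x y := by funext j; simp [vecMulMat, smul_add, Finset.sum_add_distrib]

@[simp] lemma vecMulMatHom_apply {m n : ℕ} (U : Matrix (Fin m) (Fin n) A)
    (x : Fin m → M) : vecMulMatHom U x = vecMulMat x U := rfl

/-- evaluation-sum character on `M^m` induced by a vector of characters -/
def sumEval {m : ℕ} (f : Fin m → (M →+ QZ)) : (Fin m → M) →+ QZ :=
  ∑ i, (f i).comp (Pi.evalAddMonoidHom (fun _ => M) i)

@[simp] lemma sumEval_apply {m : ℕ} (f : Fin m → (M →+ QZ)) (x : Fin m → M) :
    sumEval f x = ∑ i, f i (x i) := by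
  simp [sumEval, AddMonoidHom.finset_sum_apply]

lemma sumEval_single {m : ℕ} (f : Fin m → (M →+ QZ)) (i : Fin m) (z : M) :
    sumEval f (Pi.single i z) = f i z := by
  rw [sumEval_apply,
    Fintype.sum_eq_single i (fun i' hi' => by rw [Pi.single_eq_of_ne hi', map_zero]),
    Pi.single_eq_same]

lemma vecMulMat_single {m n : ℕ} (U : Matrix (Fin m) (Fin n) A) (i : Fin m) (z : M) :
    vecMulMat (Pi.single i z) U = fun j => op (U i j) • z := by
  funext j
  simp only [vecMulMat]
  rw [Fintype.sum_eq_single i (fun i' hi' => by rw [Pi.single_eq_of_ne hi', smul_zero])]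
  rw [Pi.single_eq_same]

lemma pairing_right {a b : ℕ} (W : Matrix (Fin a) (Fin b) A)
    (f : Fin b → (M →+ QZ)) (x : Fin a → M) :
    ∑ j, f j (vecMulMat x W j) = ∑ i, matVecMul W f i (x i) := by
  simp only [vecMulMat, matVecMul, map_sum, AddMonoidHom.finset_sum_apply,
    charLeft_smul_apply]
  rw [Finset.sum_comm]

/-- Elementary duality for one pair of matrices, right-module side. -/
lemma rightP_iff {m n p : ℕ} (U : Matrix (Fin m) (Fin n) A)
    (V : Matrix (Fin p) (Fin m) A) :
    (∀ x : Fin m → M, vecMulMat x U = 0 → ∃ y, x = vecMulMat y V) ↔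
    (∀ f : Fin m → (M →+ QZ), matVecMul V f = 0 →
      ∃ g : Fin n → (M →+ QZ), f = matVecMul U g) := by
  constructor
  · intro h f hf
    -- the character `sumEval f` kills the kernel of `· U`
    have hker : ∀ x ∈ (vecMulMatHom (M := M) U).ker, sumEval f x = 0 := by
      intro x hx
      obtain ⟨y, rfl⟩ := h x hx
      rw [sumEval_apply, pairing_right, hf]
      simp
    set hU := vecMulMatHom (M := M) U
    let q : ((Fin m → M) ⧸ hU.ker) →+ QZ := QuotientAddGroup.lift hU.ker (sumEval f) hker
    let e : ((Fin m → M) ⧸ hU.ker) ≃+ hU.range := QuotientAddGroup.quotientKerEquivRange hU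
    let h₀ : hU.range →+ QZ := q.comp (e.symm : hU.range ≃+ _)
    obtain ⟨hh, hhc⟩ := (Module.Baer.of_divisible _).extension_property_addMonoidHom
      hU.range.subtype Subtype.val_injective h₀
    have key : ∀ x : Fin m → M, hh (vecMulMat x U) = sumEval f x := by
      intro x
      have h1 : hh (vecMulMat x U) = h₀ ⟨hU x, ⟨x, rfl⟩⟩ := by
        have := DFunLike.congr_fun hhc (⟨hU x, ⟨x, rfl⟩⟩ : hU.range)
        simp at this; exact this
      rw [h1]
      have h2 : e ((QuotientAddGroup.mk x : (Fin m → M) ⧸ hU.ker)) = ⟨hU x, ⟨x, rfl⟩⟩ := rfl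
      have h3 : e.symm ⟨hU x, ⟨x, rfl⟩⟩ = QuotientAddGroup.mk x := by
        rw [← h2, AddEquiv.symm_apply_apply]
      show q (e.symm ⟨hU x, ⟨x, rfl⟩⟩) = sumEval f x
      rw [h3]
      rfl
    refine ⟨fun j => hh.comp (AddMonoidHom.single (fun _ => M) j), ?_⟩
    funext i
    ext z
    have : (∑ j, Pi.single (M := fun _ => M) j (op (U i j) • z)) = vecMulMat (Pi.single i z) U := by
      rw [vecMulMat_single]
      exact Finset.univ_sum_single _
    calc f i z = sumEval f (Pi.single i z) := (sumEval_single f i z).symm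
      _ = hh (vecMulMat (Pi.single i z) U) := (key _).symm
      _ = hh (∑ j, Pi.single (M := fun _ => M) j (op (U i j) • z)) := by rw [this]
      _ = ∑ j, hh (Pi.single j (op (U i j) • z)) := map_sum _ _ _
      _ = matVecMul U (fun j => hh.comp (AddMonoidHom.single (fun _ => M) j)) i z := by
          simp [matVecMul, AddMonoidHom.finset_sum_apply]
  · intro h x hxU
    by_contra hx
    push_neg at hx
    have hx' : x ∉ (vecMulMatHom (M := M) V).range := by
      rintro ⟨y, rfl⟩
      exact hx y rfl
    set H := (vecMulMatHom (M := M) V).range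
    have hq : (QuotientAddGroup.mk x : (Fin m → M) ⧸ H) ≠ 0 := by
      simpa [QuotientAddGroup.eq_zero_iff] using hx'
    obtain ⟨c, hc⟩ := CharacterModule.exists_character_apply_ne_zero_of_ne_zero hq
    let φ : (Fin m → M) →+ QZ :=
      AddMonoidHom.comp (c : ((Fin m → M) ⧸ H) →+ QZ) (QuotientAddGroup.mk' H)
    have hφH : ∀ w ∈ H, φ w = 0 := by
      intro w hw
      have : (QuotientAddGroup.mk' H) w = 0 := (QuotientAddGroup.eq_zero_iff w).mpr hw
      show (c : ((Fin m → M) ⧸ H) →+ QZ) ((QuotientAddGroup.mk' H) w) = 0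
      rw [this, map_zero]
    set f : Fin m → (M →+ QZ) := fun i => φ.comp (AddMonoidHom.single (fun _ => M) i)
    have hVf : matVecMul V f = 0 := by
      funext k
      ext z
      show (∑ i, V k i • f i) z = 0
      rw [AddMonoidHom.finset_sum_apply]
      simp only [charLeft_smul_apply, f, AddMonoidHom.comp_apply, AddMonoidHom.single_apply]
      rw [← map_sum]
      have : (∑ i, Pi.single (M := fun _ => M) i (op (V k i) • z)) = vecMulMat (Pi.single k z) V := by
        rw [vecMulMat_single]; exact Finset.univ_sum_single _
      rw [this]
      exact hφH _ ⟨Pi.single k z, rfl⟩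
    obtain ⟨g, hg⟩ := h f hVf
    have : φ x = 0 := by
      have hφx : φ x = ∑ i, f i (x i) := by
        simp only [f, AddMonoidHom.comp_apply, AddMonoidHom.single_apply]
        rw [← map_sum]
        congr 1
        exact (Finset.univ_sum_single _).symm
      rw [hφx, hg, ← pairing_right, hxU]
      simp
    exact hc this
  
end RightLemmas

section LeftLemmas

variable {N : Type u} [AddCommGroup N] [Module A N]

/-- `x ↦ Wx` as an additive monoid hom. -/
def matVecMulHom {p m : ℕ} (W : Matrix (Fin p) (Fin m) A) :
    (Fin m → N) →+ (Fin p → N) where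
  toFun x := matVecMul W x
  map_zero' := by funext k; simp [matVecMul]
  map_add' x y := by funext k; simp [matVecMul, smul_add, Finset.sum_add_distrib]

@[simp] lemma matVecMulHom_apply {p m : ℕ} (W : Matrix (Fin p) (Fin m) A)
    (x : Fin m → N) : matVecMulHom W x = matVecMul W x := rfl

/-- evaluation-sum character on `N^m` induced by a vector of characters -/
def sumEvalL {m : ℕ} (f : Fin m → (N →+ QZ)) : (Fin m → N) →+ QZ :=
  ∑ i, (f i).comp (Pi.evalAddMonoidHom (fun _ => N) i)

@[simp] lemma sumEvalL_apply {m : ℕ} (f : Fin m → (N →+ QZ)) (x : Fin m → N) :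
    sumEvalL f x = ∑ i, f i (x i) := by
  simp [sumEvalL, AddMonoidHom.finset_sum_apply]

lemma sumEvalL_single {m : ℕ} (f : Fin m → (N →+ QZ)) (i : Fin m) (z : N) :
    sumEvalL f (Pi.single i z) = f i z := by
  rw [sumEvalL_apply,
    Fintype.sum_eq_single i (fun i' hi' => by rw [Pi.single_eq_of_ne hi', map_zero]),
    Pi.single_eq_same]

lemma matVecMul_single {p m : ℕ} (W : Matrix (Fin p) (Fin m) A) (i : Fin m) (z : N) :
    matVecMul W (Pi.single i z) = fun k => W k i • z := by
  funext k
  simp only [matVecMul]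
  rw [Fintype.sum_eq_single i (fun i' hi' => by rw [Pi.single_eq_of_ne hi', smul_zero])]
  rw [Pi.single_eq_same]

lemma pairing_left {a b : ℕ} (W : Matrix (Fin a) (Fin b) A)
    (f : Fin a → (N →+ QZ)) (y : Fin b → N) :
    ∑ i, f i (matVecMul W y i) = ∑ j, vecMulMat f W j (y j) := by
  simp only [vecMulMat, matVecMul, map_sum, AddMonoidHom.finset_sum_apply,
    charRight_smul_apply, unop_op]
  rw [Finset.sum_comm]

/-- Elementary duality for one pair of matrices, left-module side. -/
lemma leftP_iff {m n p : ℕ} (U : Matrix (Fin m) (Fin n) A)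
    (V : Matrix (Fin p) (Fin m) A) :
    (∀ x : Fin m → N, matVecMul V x = 0 → ∃ y, x = matVecMul U y) ↔
    (∀ f : Fin m → (N →+ QZ), vecMulMat f U = 0 →
      ∃ g : Fin p → (N →+ QZ), f = vecMulMat g V) := by
  constructor
  · intro h f hf
    have hker : ∀ x ∈ (matVecMulHom (N := N) V).ker, sumEvalL f x = 0 := by
      intro x hx
      obtain ⟨y, rfl⟩ := h x hx
      rw [sumEvalL_apply, pairing_left, hf]
      simp
    set hV := matVecMulHom (N := N) V
    let q : ((Fin m → N) ⧸ hV.ker) →+ QZ := QuotientAddGroup.lift hV.ker (sumEvalL f) hker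
    let e : ((Fin m → N) ⧸ hV.ker) ≃+ hV.range := QuotientAddGroup.quotientKerEquivRange hV
    let h₀ : hV.range →+ QZ := q.comp (e.symm : hV.range ≃+ _)
    obtain ⟨hh, hhc⟩ := (Module.Baer.of_divisible _).extension_property_addMonoidHom
      hV.range.subtype Subtype.val_injective h₀
    have key : ∀ x : Fin m → N, hh (matVecMul V x) = sumEvalL f x := by
      intro x
      have h1 : hh (matVecMul V x) = h₀ ⟨hV x, ⟨x, rfl⟩⟩ := by
        have := DFunLike.congr_fun hhc (⟨hV x, ⟨x, rfl⟩⟩ : hV.range)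
        simp at this; exact this
      rw [h1]
      have h2 : e ((QuotientAddGroup.mk x : (Fin m → N) ⧸ hV.ker)) = ⟨hV x, ⟨x, rfl⟩⟩ := rfl
      have h3 : e.symm ⟨hV x, ⟨x, rfl⟩⟩ = QuotientAddGroup.mk x := by
        rw [← h2, AddEquiv.symm_apply_apply]
      show q (e.symm ⟨hV x, ⟨x, rfl⟩⟩) = sumEvalL f x
      rw [h3]
      rfl
    refine ⟨fun k => hh.comp (AddMonoidHom.single (fun _ => N) k), ?_⟩
    funext i
    ext z
    have : (∑ k, Pi.single (M := fun _ => N) k (V k i • z)) = matVecMul V (Pi.single i z) := by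
      rw [matVecMul_single]
      exact Finset.univ_sum_single _
    calc f i z = sumEvalL f (Pi.single i z) := (sumEvalL_single f i z).symm
      _ = hh (matVecMul V (Pi.single i z)) := (key _).symm
      _ = hh (∑ k, Pi.single (M := fun _ => N) k (V k i • z)) := by rw [this]
      _ = ∑ k, hh (Pi.single k (V k i • z)) := map_sum _ _ _
      _ = vecMulMat (fun k => hh.comp (AddMonoidHom.single (fun _ => N) k)) V i z := by
          simp [vecMulMat, AddMonoidHom.finset_sum_apply]
  · intro h x hVx
    by_contra hx
    push_neg at hx
    have hx' : x ∉ (matVecMulHom (N := N) U).range := by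
      rintro ⟨y, rfl⟩
      exact hx y rfl
    set H := (matVecMulHom (N := N) U).range
    have hq : (QuotientAddGroup.mk x : (Fin m → N) ⧸ H) ≠ 0 := by
      simpa [QuotientAddGroup.eq_zero_iff] using hx'
    obtain ⟨c, hc⟩ := CharacterModule.exists_character_apply_ne_zero_of_ne_zero hq
    let φ : (Fin m → N) →+ QZ :=
      AddMonoidHom.comp (c : ((Fin m → N) ⧸ H) →+ QZ) (QuotientAddGroup.mk' H)
    have hφH : ∀ w ∈ H, φ w = 0 := by
      intro w hw
      have : (QuotientAddGroup.mk' H) w = 0 := (QuotientAddGroup.eq_zero_iff w).mpr hw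
      show (c : ((Fin m → N) ⧸ H) →+ QZ) ((QuotientAddGroup.mk' H) w) = 0
      rw [this, map_zero]
    set f : Fin m → (N →+ QZ) := fun i => φ.comp (AddMonoidHom.single (fun _ => N) i)
    have hUf : vecMulMat f U = 0 := by
      funext j
      ext z
      show (∑ i, op (U i j) • f i) z = 0
      rw [AddMonoidHom.finset_sum_apply]
      simp only [charRight_smul_apply, unop_op, f, AddMonoidHom.comp_apply,
        AddMonoidHom.single_apply]
      rw [← map_sum]
      have : (∑ i, Pi.single (M := fun _ => N) i (U i j • z)) = matVecMul U (Pi.single j z) := by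
        rw [matVecMul_single]; exact Finset.univ_sum_single _
      rw [this]
      exact hφH _ ⟨Pi.single j z, rfl⟩
    obtain ⟨g, hg⟩ := h f hUf
    have : φ x = 0 := by
      have hφx : φ x = ∑ i, f i (x i) := by
        simp only [f, AddMonoidHom.comp_apply, AddMonoidHom.single_apply]
        rw [← map_sum]
        congr 1
        exact (Finset.univ_sum_single _).symm
      rw [hφx, hg, ← pairing_left, hVx]
      simp
    exact hc this

end LeftLemmas

end Stmt11Aux

namespace Stmt11Aux

variable {A : Type u} [Ring A]

/-- The character module of a left module, as a right module object. -/
def dualLeft (N : ModuleCat.{u} A) : ModuleCat.{u} Aᵐᵒᵖ :=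
  ModuleCat.of Aᵐᵒᵖ (↑N →+ QZ)

/-- The character module of a right module, as a left module object. -/
def dualRight (M : ModuleCat.{u} Aᵐᵒᵖ) : ModuleCat.{u} A :=
  ModuleCat.of A (↑M →+ QZ)

lemma rightClass_dualLeft {I : Type u} (m n p : I → ℕ)
    (U : ∀ i, Matrix (Fin (m i)) (Fin (n i)) A)
    (V : ∀ i, Matrix (Fin (p i)) (Fin (m i)) A) (N : ModuleCat.{u} A) :
    rightClass A m n p U V (dualLeft N) ↔ leftClass A m n p U V N :=
  ⟨fun h i => (leftP_iff (U i) (V i)).mpr (h i),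
   fun h i => (leftP_iff (U i) (V i)).mp (h i)⟩

lemma leftClass_dualRight {I : Type u} (m n p : I → ℕ)
    (U : ∀ i, Matrix (Fin (m i)) (Fin (n i)) A)
    (V : ∀ i, Matrix (Fin (p i)) (Fin (m i)) A) (M : ModuleCat.{u} Aᵐᵒᵖ) :
    leftClass A m n p U V (dualRight M) ↔ rightClass A m n p U V M :=
  ⟨fun h i => (rightP_iff (U i) (V i)).mpr (h i),
   fun h i => (rightP_iff (U i) (V i)).mp (h i)⟩

end Stmt11Aux

open Stmt11Aux

/-- sending the definable class of right `A`-modules defined by the family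
`(U_i, V_i)` to the class of left `A`-modules defined by the swapped family `(V_i, U_i)`
is a well-defined, inclusion-preserving bijection whose inverse is given by the analogous
swapping construction. -/
theorem stmt11 (A : Type u) [Ring A] :
    ∃ (Φ : {D : ModuleCat.{u} Aᵐᵒᵖ → Prop // IsDefinableRight A D} →
        {E : ModuleCat.{u} A → Prop // IsDefinableLeft A E})
      (Ψ : {E : ModuleCat.{u} A → Prop // IsDefinableLeft A E} →
        {D : ModuleCat.{u} Aᵐᵒᵖ → Prop // IsDefinableRight A D}),
      Function.LeftInverse Ψ Φ ∧ Function.RightInverse Ψ Φ ∧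
      (∀ D D' : {D : ModuleCat.{u} Aᵐᵒᵖ → Prop // IsDefinableRight A D},
        (∀ M, D.1 M → D'.1 M) → ∀ N, (Φ D).1 N → (Φ D').1 N) ∧
      (∀ (I : Type u) (m n p : I → ℕ)
        (U : ∀ i, Matrix (Fin (m i)) (Fin (n i)) A)
        (V : ∀ i, Matrix (Fin (p i)) (Fin (m i)) A),
        (Φ ⟨rightClass A m n p U V, ⟨I, m, n, p, U, V, rfl⟩⟩).1 =
          leftClass A m n p U V) ∧
      (∀ (I : Type u) (m n p : I → ℕ)
        (U : ∀ i, Matrix (Fin (m i)) (Fin (n i)) A)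
        (V : ∀ i, Matrix (Fin (p i)) (Fin (m i)) A),
        (Ψ ⟨leftClass A m n p U V, ⟨I, m, n, p, U, V, rfl⟩⟩).1 =
          rightClass A m n p U V) := by
  refine ⟨fun D => ⟨fun N => D.1 (dualLeft N), ?_⟩,
          fun E => ⟨fun M => E.1 (dualRight M), ?_⟩, ?_, ?_, ?_, ?_, ?_⟩
  · obtain ⟨I, m, n, p, U, V, hD⟩ := D.2
    exact ⟨I, m, n, p, U, V, funext fun N => propext
      (by rw [hD]; exact rightClass_dualLeft m n p U V N)⟩
  · obtain ⟨I, m, n, p, U, V, hE⟩ := E.2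
    exact ⟨I, m, n, p, U, V, funext fun M => propext
      (by rw [hE]; exact leftClass_dualRight m n p U V M)⟩
  · rintro ⟨D, I, m, n, p, U, V, rfl⟩
    refine Subtype.ext (funext fun M => propext ?_)
    exact (rightClass_dualLeft m n p U V (dualRight M)).trans
      (leftClass_dualRight m n p U V M)
  · rintro ⟨E, I, m, n, p, U, V, rfl⟩
    refine Subtype.ext (funext fun N => propext ?_)
    exact (leftClass_dualRight m n p U V (dualLeft N)).trans
      (rightClass_dualLeft m n p U V N)
  · intro D D' h N hN
    exact h _ hN
  · intro I m n p U V
    exact funext fun N => propext (rightClass_dualLeft m n p U V N)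
  · intro I m n p U V
    exact funext fun M => propext (leftClass_dualRight m n p U V M)
end
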